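/- Let m ≥ 1 and l be integers, let a, b be positive integers, and let r_{−1}, r_0, …, r_ν and k_1, …, k_ν be the data of the Euclidean algorithm: r_{−1} = b, r_0 = a, r_{i−2} = k_i·r_{i−1} + r_i with 0 ≤ r_i < r_{i−1} for 1 ≤ i ≤ ν, and r_ν = 0. Then for every z ∈ ℤ/mℤ: Π_{i=1}^{ν} ( Π_{j=1}^{k_i} ω_l( r_{i−1}·z, (r_{i−2} − j·r_{i−1})·z, r_{i−1}·z ) )^{(−1)^{i−1}} = ζ_{m²}^{l·z̃·( b·(ã·z) − a·(b̃·z) )}, where (ã·z) and (b̃·z) denote the canonical representatives in {0,…,m−1} of a·z and b·z in ℤ/mℤ, and n·z means the action of the integer n on z ∈ ℤ/mℤ. -/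

import Mathlib

/-- `ζ_n = exp(2πi/n)`. -/
noncomputable def zetaC (n : ℕ) : ℂ := Complex.exp (2 * Real.pi * Complex.I / n)

/-- The 3-cocycle `ω_l(x,y,z) = ζ_m^{l·x̃·⌊(ỹ+z̃)/m⌋}` on `ℤ/mℤ`. -/
noncomputable def omegaL (m : ℕ) (l : ℤ) (x y z : ZMod m) : ℂ :=
  zetaC m ^ (l * (x.val : ℤ) * (((y.val + z.val) / m : ℕ) : ℤ))

lemma zetaC_ne_zero (n : ℕ) : zetaC n ≠ 0 := Complex.exp_ne_zero _

lemma zetaC_zpow_self (n : ℕ) (hn : n ≠ 0) : zetaC n ^ (n : ℤ) = 1 := by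
  rw [zetaC, ← Complex.exp_int_mul]
  have h : (n : ℂ) ≠ 0 := Nat.cast_ne_zero.mpr hn
  rw [show ((n : ℤ) : ℂ) * (2 * Real.pi * Complex.I / n) = 2 * Real.pi * Complex.I by
    push_cast; field_simp]
  exact Complex.exp_two_pi_mul_I

lemma zetaC_sq_pow (m : ℕ) (hm : m ≠ 0) : zetaC (m ^ 2) ^ (m : ℤ) = zetaC m := by
  rw [zetaC, zetaC, ← Complex.exp_int_mul]
  congr 1
  have h : (m : ℂ) ≠ 0 := Nat.cast_ne_zero.mpr hm
  push_cast
  field_simp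

lemma zetaC_zpow_add_sq_mul (m : ℕ) (hm : m ≠ 0) (e q : ℤ) :
    zetaC (m ^ 2) ^ (e + (m : ℤ) ^ 2 * q) = zetaC (m ^ 2) ^ e := by
  have h2 : ((m ^ 2 : ℕ) : ℤ) = (m : ℤ) ^ 2 := by push_cast; ring
  rw [zpow_add₀ (zetaC_ne_zero _), ← h2, zpow_mul, zetaC_zpow_self (m ^ 2) (by positivity),
    one_zpow, mul_one]

lemma prodZpowAux {a : ℂ} (ha : a ≠ 0) (s : Finset ℕ) (f : ℕ → ℤ) :
    ∏ i ∈ s, a ^ f i = a ^ (∑ i ∈ s, f i) := by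
  induction s using Finset.cons_induction with
  | empty => simp
  | cons i s hi ih => rw [Finset.prod_cons, Finset.sum_cons, zpow_add₀ ha, ih]

lemma omegaL_eq (m : ℕ) (hm : m ≠ 0) (l : ℤ) (x y z : ZMod m) :
    omegaL m l x y z
      = zetaC (m ^ 2) ^ (l * (x.val : ℤ) * ((y.val : ℤ) + (z.val : ℤ) - ((y + z).val : ℤ))) := by
  haveI : NeZero m := ⟨hm⟩
  have hc : (m : ℤ) * (((y.val + z.val) / m : ℕ) : ℤ)
      = (y.val : ℤ) + (z.val : ℤ) - ((y + z).val : ℤ) := by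
    have h2 : (y + z).val = (y.val + z.val) % m := ZMod.val_add y z
    have key : m * ((y.val + z.val) / m) + (y + z).val = y.val + z.val := by
      rw [h2, Nat.div_add_mod]
    omega
  rw [omegaL, ← zetaC_sq_pow m hm, ← zpow_mul]
  congr 1
  rw [← hc]
  ring

/-- The key integer identity: the alternating telescoping sum. -/
lemma sum_aux (m : ℕ) (Z : ℤ) (ν : ℕ) (r c : ℕ → ℤ) (k : ℕ → ℕ) (v : ℕ → ℤ) (l : ℤ)
    (hv : ∀ i, v i = r i * Z - m * c i)
    (hrec : ∀ i < ν, r i = (k (i + 1) : ℤ) * r (i + 1) + r (i + 2))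
    (hrν : r (ν + 1) = 0) (hcν : c (ν + 1) = 0) :
    ∃ Q : ℤ,
      ∑ i ∈ Finset.range ν,
          (l * v (i + 1) * (v (i + 2) - v i + (k (i + 1) : ℤ) * v (i + 1))) * (-1 : ℤ) ^ i
        = l * Z * (r 0 * v 1 - r 1 * v 0) + (m : ℤ) ^ 2 * Q := by
  refine ⟨∑ i ∈ Finset.range ν,
      (-1 : ℤ) ^ i * l * (c (i + 1) * (c (i + 2) + (k (i + 1) : ℤ) * c (i + 1) - c i)), ?_⟩
  set A : ℕ → ℤ := fun i => (-1 : ℤ) ^ i * (r i * c (i + 1) - r (i + 1) * c i) with hA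
  have hterm : ∀ i ∈ Finset.range ν,
      (l * v (i + 1) * (v (i + 2) - v i + (k (i + 1) : ℤ) * v (i + 1))) * (-1 : ℤ) ^ i
        = l * (m : ℤ) * Z * (A (i + 1) - A i)
          + (m : ℤ) ^ 2 *
            ((-1 : ℤ) ^ i * l * (c (i + 1) * (c (i + 2) + (k (i + 1) : ℤ) * c (i + 1) - c i))) := by
    intro i hi
    have hri := hrec i (Finset.mem_range.mp hi)
    simp only [hA]
    rw [hv i, hv (i + 1), hv (i + 2), hri, pow_succ]
    ring
  rw [Finset.sum_congr rfl hterm, Finset.sum_add_distrib, ← Finset.mul_sum, ← Finset.mul_sum,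
    Finset.sum_range_sub A]
  have hAν : A ν = 0 := by simp [hA, hrν, hcν]
  rw [hAν, hv 0, hv 1]
  simp only [hA]
  ring

/- Here `r i` stands for the paper's `r_{i-1}` (so `r 0 = r_{-1} = b`, `r 1 = r_0 = a`,
`r (ν+1) = r_ν = 0`), and the product over `i ∈ range ν` corresponds to the product over
`i = 1, …, ν`; `j ∈ range (k (i+1))` corresponds to `j = 1, …, k_i`. -/
theorem statement8 (m : ℕ) (hm : 1 ≤ m) (l : ℤ) (a b : ℤ) (ha : 0 < a) (hb : 0 < b)
    (ν : ℕ) (r : ℕ → ℤ) (k : ℕ → ℕ)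
    (hr0 : r 0 = b) (hr1 : r 1 = a) (hrν : r (ν + 1) = 0)
    (hrec : ∀ i : ℕ, 1 ≤ i → i ≤ ν → r (i - 1) = (k i : ℤ) * r i + r (i + 1))
    (hlt : ∀ i : ℕ, 1 ≤ i → i ≤ ν → 0 ≤ r (i + 1) ∧ r (i + 1) < r i)
    (z : ZMod m) :
    (∏ i ∈ Finset.range ν,
        (∏ j ∈ Finset.range (k (i + 1)),
            omegaL m l (r (i + 1) • z) ((r i - ((j : ℤ) + 1) * r (i + 1)) • z) (r (i + 1) • z))
          ^ ((-1 : ℤ) ^ i)) =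
      zetaC (m ^ 2) ^ (l * (z.val : ℤ) * (b * ((a • z).val : ℤ) - a * ((b • z).val : ℤ))) := by
  haveI : NeZero m := ⟨by omega⟩
  have hm0 : m ≠ 0 := by omega
  have hζ : zetaC (m ^ 2) ≠ 0 := zetaC_ne_zero _
  -- the values v i and the carries c i
  have hdvd : ∀ i : ℕ, ∃ q : ℤ, r i * (z.val : ℤ) - (((r i • z).val : ℤ)) = m * q := by
    intro i
    have hcast : ((r i * (z.val : ℤ) : ℤ) : ZMod m) = (((((r i • z).val : ℤ)) : ℤ) : ZMod m) := by
      push_cast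
      simp [ZMod.natCast_val, ZMod.cast_id, zsmul_eq_mul]
    have hmod := (ZMod.intCast_eq_intCast_iff _ _ _).mp hcast
    obtain ⟨q, hq⟩ := Int.ModEq.dvd hmod
    exact ⟨-q, by push_cast at hq ⊢; linarith⟩
  choose c hc using hdvd
  have hv : ∀ i, (((r i • z).val : ℤ)) = r i * (z.val : ℤ) - m * c i := fun i => by linarith [hc i]
  have hcν : c (ν + 1) = 0 := by
    have h1 : (((r (ν + 1) • z).val : ℤ)) = 0 := by rw [hrν]; simp
    have h2 := hc (ν + 1)
    rw [h1, hrν] at h2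
    have h3 : (m : ℤ) * c (ν + 1) = 0 := by linarith
    have hm' : (m : ℤ) ≠ 0 := by exact_mod_cast hm0
    exact (mul_eq_zero.mp h3).resolve_left hm' 
  -- rewrite each factor of the outer product
  have key : ∀ i ∈ Finset.range ν,
      (∏ j ∈ Finset.range (k (i + 1)),
          omegaL m l (r (i + 1) • z) ((r i - ((j : ℤ) + 1) * r (i + 1)) • z) (r (i + 1) • z))
        ^ ((-1 : ℤ) ^ i)
      = zetaC (m ^ 2) ^
          ((l * (((r (i + 1) • z).val : ℤ)) *
            ((((r (i + 2) • z).val : ℤ)) - (((r i • z).val : ℤ))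
              + (k (i + 1) : ℤ) * (((r (i + 1) • z).val : ℤ)))) * (-1 : ℤ) ^ i) := by
    intro i hi
    have hiν : i < ν := Finset.mem_range.mp hi
    have hKr : r i - (k (i + 1) : ℤ) * r (i + 1) = r (i + 2) := by
      have h := hrec (i + 1) (by omega) (by omega)
      simp only [Nat.add_sub_cancel] at h
      linarith
    have hfact : ∀ j ∈ Finset.range (k (i + 1)),
        omegaL m l (r (i + 1) • z) ((r i - ((j : ℤ) + 1) * r (i + 1)) • z) (r (i + 1) • z)
        = zetaC (m ^ 2) ^
            (l * (((r (i + 1) • z).val : ℤ)) *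
              ((((r i - (((j + 1 : ℕ)) : ℤ) * r (i + 1)) • z).val : ℤ)
                + (((r (i + 1) • z).val : ℤ))
                - (((r i - ((j : ℕ) : ℤ) * r (i + 1)) • z).val : ℤ))) := by
      intro j _
      have hadd : ((r i - ((j : ℤ) + 1) * r (i + 1)) • z) + (r (i + 1) • z)
          = (r i - ((j : ℕ) : ℤ) * r (i + 1)) • z := by
        rw [← add_smul]; ring_nf
      rw [omegaL_eq m hm0, hadd]
      congr 1
    rw [Finset.prod_congr rfl hfact, prodZpowAux hζ, ← zpow_mul]
    congr 1
    have hsum : ∑ j ∈ Finset.range (k (i + 1)),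
        (l * (((r (i + 1) • z).val : ℤ)) *
          ((((r i - (((j + 1 : ℕ)) : ℤ) * r (i + 1)) • z).val : ℤ)
            + (((r (i + 1) • z).val : ℤ))
            - (((r i - ((j : ℕ) : ℤ) * r (i + 1)) • z).val : ℤ)))
        = l * (((r (i + 1) • z).val : ℤ)) *
            ((((r i - ((k (i + 1) : ℕ) : ℤ) * r (i + 1)) • z).val : ℤ)
              - (((r i - ((0 : ℕ) : ℤ) * r (i + 1)) • z).val : ℤ)
              + (k (i + 1) : ℤ) * (((r (i + 1) • z).val : ℤ))) := by
      rw [← Finset.mul_sum]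
      congr 1
      have htel := Finset.sum_range_sub
        (fun j : ℕ => (((r i - ((j : ℕ) : ℤ) * r (i + 1)) • z).val : ℤ)) (k (i + 1))
      calc ∑ j ∈ Finset.range (k (i + 1)),
            ((((r i - (((j + 1 : ℕ)) : ℤ) * r (i + 1)) • z).val : ℤ)
              + (((r (i + 1) • z).val : ℤ))
              - (((r i - ((j : ℕ) : ℤ) * r (i + 1)) • z).val : ℤ))
          = ∑ j ∈ Finset.range (k (i + 1)),
            (((((r i - (((j + 1 : ℕ)) : ℤ) * r (i + 1)) • z).val : ℤ)
              - (((r i - ((j : ℕ) : ℤ) * r (i + 1)) • z).val : ℤ))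
              + (((r (i + 1) • z).val : ℤ))) := by
            apply Finset.sum_congr rfl; intros; ring
        _ = _ := by
            rw [Finset.sum_add_distrib, htel, Finset.sum_const, Finset.card_range,
              nsmul_eq_mul]
    rw [hsum, hKr]
    norm_num
  rw [Finset.prod_congr rfl key, prodZpowAux hζ]
  rw [← hr0, ← hr1]
  obtain ⟨Q, hQ⟩ := sum_aux m (z.val : ℤ) ν r c k (fun i => (((r i • z).val : ℤ))) l hv
    (fun i hi => by
      have h := hrec (i + 1) (by omega) (by omega)
      simpa only [Nat.add_sub_cancel] using h)
    hrν hcν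
  rw [hQ]
  exact zetaC_zpow_add_sq_mul m hm0 _ Q
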